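/- arXiv:2008.03738 — 3 statements merged into one kernel-verified Lean document; each statement's English description precedes it below -/
import Mathlib

section
/- Let μ be a probability measure on ℝ² that is absolutely continuous with respect to two-dimensional Lebesgue measure, with density f ≥ 0. Define the marginal density g(x₁) = ∫_ℝ f(x₁,t) dt, the marginal CDF F₁(x₁) = ∫_{−∞}^{x₁} g(s) ds, and the conditional CDF F₂(x₁,x₂) = (∫_{−∞}^{x₂} f(x₁,t) dt) / g(x₁) whenever g(x₁) > 0 (set F₂(x₁,x₂) = 0 when g(x₁) = 0). Then the map Φ(x₁,x₂) = (F₁(x₁), F₂(x₁,x₂)) pushes μ forward to the uniform distribution on [0,1]², i.e., Measure.map Φ μ equals two-dimensional Lebesgue measure restricted to [0,1]². -/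
open MeasureTheory Set Filter Topology

lemma rosenblatt_aux (h : ℝ → ℝ) (h0 : ∀ x, 0 ≤ h x) (hi : Integrable h) (b : ℝ) :
    ∫ s in {x | (∫ u in Set.Iic x, h u) ≤ b}, h s = max 0 (min b (∫ u, h u)) := by
  set T := ∫ u, h u with hT
  set H : ℝ → ℝ := fun x => ∫ u in Iic x, h u with hHdef
  have h0ae : 0 ≤ᵐ[(volume : Measure ℝ)] h := ae_of_all _ h0
  have hT0 : 0 ≤ T := integral_nonneg h0
  have hH0 : ∀ x, 0 ≤ H x := fun x => setIntegral_nonneg measurableSet_Iic fun u _ => h0 u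
  have hHmono : Monotone H := fun x y hxy =>
    setIntegral_mono_set hi.integrableOn (ae_restrict_of_ae h0ae)
      (HasSubset.Subset.eventuallyLE (Iic_subset_Iic.2 hxy))
  have hHleT : ∀ x, H x ≤ T := fun x => setIntegral_le_integral hi h0ae
  have hHcont : Continuous H := by
    have h1 : Continuous fun x => (∫ u in Iic (0:ℝ), h u) + ∫ u in (0:ℝ)..x, h u :=
      continuous_const.add (hi.continuous_primitive 0)
    have h2 : ∀ x, H x = (∫ u in Iic (0:ℝ), h u) + ∫ u in (0:ℝ)..x, h u := by
      intro x
      rw [← intervalIntegral.integral_Iic_sub_Iic hi.integrableOn hi.integrableOn]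
      ring
    simpa [← funext h2] using h1
  have hHtop : Tendsto H atTop (𝓝 T) :=
    (aecover_Iic (tendsto_id (α := ℝ))).integral_tendsto_of_countably_generated hi
  have hIoiT : Tendsto (fun x : ℝ => ∫ u in Ioi x, h u) atBot (𝓝 T) :=
    (aecover_Ioi (tendsto_id (α := ℝ))).integral_tendsto_of_countably_generated hi
  have hsplit : ∀ x : ℝ, H x = T - ∫ u in Ioi x, h u := by
    intro x
    have : H x + ∫ u in Ioi x, h u = T := by
      rw [hHdef, ← setIntegral_union (Iic_disjoint_Ioi le_rfl) measurableSet_Ioi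
        hi.integrableOn hi.integrableOn, Iic_union_Ioi, setIntegral_univ]
    linarith
  have hHbot : Tendsto H atBot (𝓝 0) := by
    have : Tendsto (fun x : ℝ => T - ∫ u in Ioi x, h u) atBot (𝓝 (T - T)) :=
      tendsto_const_nhds.sub hIoiT
    simpa [← funext hsplit] using this
  rcases lt_or_ge b 0 with hb | hb
  · have hA : {x | H x ≤ b} = (∅ : Set ℝ) := by
      ext x; simp only [mem_setOf_eq, mem_empty_iff_false, iff_false, not_le]
      exact lt_of_lt_of_le hb (hH0 x)
    rw [hA]
    rw [max_eq_left (by rw [min_eq_left (le_trans hb.le hT0)]; linarith)]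
    simp
  rcases le_or_gt T b with hbT | hbT
  · have hA : {x | H x ≤ b} = (univ : Set ℝ) := by
      ext x; simp only [mem_setOf_eq, mem_univ, iff_true]
      exact le_trans (hHleT x) hbT
    rw [hA, Measure.restrict_univ, min_eq_right hbT, max_eq_right hT0]
  · set A := {x | H x ≤ b} with hAdef
    have hRHS : max 0 (min b T) = b := by rw [min_eq_left hbT.le, max_eq_right hb]
    rw [hRHS]
    have hAclosed : IsClosed A := isClosed_le hHcont continuous_const
    have hAbdd : BddAbove A := by
      obtain ⟨x₀, hx₀⟩ := (hHtop.eventually_const_lt hbT).exists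
      refine ⟨x₀, fun x hx => ?_⟩
      by_contra hgt
      push_neg at hgt
      exact absurd (le_trans (hHmono hgt.le) hx) (not_le.2 hx₀)
    by_cases hA : A.Nonempty
    · set s := sSup A with hs
      have hsA : s ∈ A := hAclosed.csSup_mem hA hAbdd
      have hAeq : A = Iic s := by
        apply subset_antisymm (fun x hx => le_csSup hAbdd hx)
        intro x hx
        exact le_trans (hHmono hx) hsA
      have hHs_le : H s ≤ b := hsA
      have hHs_ge : b ≤ H s := by
        have hseq : Tendsto (fun n : ℕ => s + 1 / ((n : ℝ) + 1)) atTop (𝓝 s) := by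
          simpa using (tendsto_const_nhds : Tendsto (fun _ : ℕ => s) atTop (𝓝 s)).add tendsto_one_div_add_atTop_nhds_zero_nat
        have hten : Tendsto (fun n : ℕ => H (s + 1 / ((n : ℝ) + 1))) atTop (𝓝 (H s)) :=
          (hHcont.tendsto s).comp hseq
        refine ge_of_tendsto hten (Eventually.of_forall fun n => ?_)
        by_contra hlt
        push_neg at hlt
        have hmem : s + 1 / ((n : ℝ) + 1) ∈ A := hlt.le
        have : s + 1 / ((n : ℝ) + 1) ≤ s := le_csSup hAbdd hmem
        have hpos : (0:ℝ) < 1 / ((n : ℝ) + 1) := by positivity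
        linarith
      calc ∫ u in A, h u = H s := by rw [hAeq]
        _ = b := le_antisymm hHs_le hHs_ge
    · have hAe : A = (∅ : Set ℝ) := not_nonempty_iff_eq_empty.1 hA
      have hb0 : b = 0 := by
        by_contra hne
        have hbpos : 0 < b := lt_of_le_of_ne hb (Ne.symm hne)
        obtain ⟨x, hx⟩ := (hHbot.eventually_lt_const hbpos).exists
        exact hA ⟨x, hx.le⟩
      rw [hAe, hb0]
      simp

/-- **Rosenblatt's uniform transformer, two-dimensional case.**
If `μ` is a probability measure on `ℝ²` with Lebesgue density `f ≥ 0`, `g` is the first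
marginal density, `F₁` the first marginal CDF and `F₂` the conditional CDF of the second
coordinate given the first (set to `0` where `g` vanishes), then the map
`Φ(x₁,x₂) = (F₁ x₁, F₂ x₁ x₂)` pushes `μ` forward to the uniform distribution on `[0,1]²`. -/
theorem stmt_1 (μ : Measure (ℝ × ℝ)) [IsProbabilityMeasure μ]
    (f : ℝ × ℝ → ℝ) (hf_meas : Measurable f) (hf_nonneg : ∀ p, 0 ≤ f p)
    (hμ : μ = volume.withDensity fun p => ENNReal.ofReal (f p))
    (g : ℝ → ℝ) (hg : ∀ x₁, g x₁ = ∫ t, f (x₁, t))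
    (F₁ : ℝ → ℝ) (hF₁ : ∀ x₁, F₁ x₁ = ∫ s in Set.Iic x₁, g s)
    (F₂ : ℝ → ℝ → ℝ)
    (hF₂ : ∀ x₁ x₂, F₂ x₁ x₂ =
      if 0 < g x₁ then (∫ t in Set.Iic x₂, f (x₁, t)) / g x₁ else 0)
    (Φ : ℝ × ℝ → ℝ × ℝ) (hΦ : ∀ p, Φ p = (F₁ p.1, F₂ p.1 p.2)) :
    Measure.map Φ μ = volume.restrict (Set.Icc (0 : ℝ) 1 ×ˢ Set.Icc (0 : ℝ) 1) := by
  classical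
  set c : ℝ → ℝ := fun r => max 0 (min r 1) with hc
  have hc_nonneg : ∀ r, 0 ≤ c r := fun r => le_max_left _ _
  have hg_nonneg : ∀ x, 0 ≤ g x := fun x => (hg x) ▸ integral_nonneg fun t => hf_nonneg _
  have hμuniv : ∫⁻ p, ENNReal.ofReal (f p) = 1 := by
    have h := measure_univ (μ := μ)
    rwa [hμ, withDensity_apply _ MeasurableSet.univ, Measure.restrict_univ] at h
  have hf_int : Integrable f := by
    refine ⟨hf_meas.aestronglyMeasurable, ?_⟩
    rw [hasFiniteIntegral_iff_ofReal (ae_of_all _ hf_nonneg), hμuniv]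
    exact ENNReal.one_lt_top
  have hf_prod_int : Integrable f ((volume : Measure ℝ).prod volume) := by
    rwa [← Measure.volume_eq_prod]
  have hf1 : ∫ p, f p = 1 := by
    rw [integral_eq_lintegral_of_nonneg_ae (ae_of_all _ hf_nonneg)
      hf_meas.aestronglyMeasurable, hμuniv]
    simp
  have hg_meas : Measurable g := by
    have h : g = fun x => ∫ t, f (x, t) := funext hg
    rw [h]
    exact hf_meas.stronglyMeasurable.integral_prod_right'.measurable
  have hg_int : Integrable g := by
    have h := MeasureTheory.Integrable.integral_prod_left (μ := (volume : Measure ℝ))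
      (ν := (volume : Measure ℝ)) hf_prod_int
    have h2 : g = fun x => ∫ y, f (x, y) := funext hg
    rwa [← h2] at h
  have hg1 : ∫ x, g x = 1 := by
    calc ∫ x, g x = ∫ x, ∫ y, f (x, y) := by simp_rw [hg]
      _ = ∫ p, f p ∂((volume : Measure ℝ).prod volume) := integral_integral hf_prod_int
      _ = 1 := by rw [← Measure.volume_eq_prod]; exact hf1
  have hF₁mono : Monotone F₁ := by
    intro x y hxy
    rw [hF₁ x, hF₁ y]
    exact setIntegral_mono_set hg_int.integrableOn
      (ae_restrict_of_ae (ae_of_all _ hg_nonneg))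
      (HasSubset.Subset.eventuallyLE (Iic_subset_Iic.2 hxy))
  have hF₁meas : Measurable F₁ := hF₁mono.measurable
  have hK_meas : Measurable fun p : ℝ × ℝ => ∫ t in Set.Iic p.2, f (p.1, t) := by
    have hk : Measurable fun q : (ℝ × ℝ) × ℝ => if q.2 ≤ q.1.2 then f (q.1.1, q.2) else 0 := by
      refine Measurable.ite ?_
        (hf_meas.comp ((measurable_fst.fst).prodMk measurable_snd)) measurable_const
      exact measurableSet_le measurable_snd measurable_fst.snd
    have h := (MeasureTheory.StronglyMeasurable.integral_prod_right'
      (ν := (volume : Measure ℝ)) hk.stronglyMeasurable).measurable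
    have heq : (fun p : ℝ × ℝ => ∫ t in Set.Iic p.2, f (p.1, t))
        = fun p : ℝ × ℝ => ∫ t, if t ≤ p.2 then f (p.1, t) else 0 := by
      funext p
      rw [← integral_indicator measurableSet_Iic]
      simp [Set.indicator_apply, Set.mem_Iic]
    rw [heq]
    exact h
  have hF₂meas : Measurable fun p : ℝ × ℝ => F₂ p.1 p.2 := by
    have heq : (fun p : ℝ × ℝ => F₂ p.1 p.2)
        = fun p => if 0 < g p.1 then (∫ t in Set.Iic p.2, f (p.1, t)) / g p.1 else 0 := by
      funext p; exact hF₂ p.1 p.2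
    rw [heq]
    exact Measurable.ite (measurableSet_lt measurable_const (hg_meas.comp measurable_fst))
      (hK_meas.div (hg_meas.comp measurable_fst)) measurable_const
  have hΦmeas : Measurable Φ := by
    have h : Φ = fun p => (F₁ p.1, F₂ p.1 p.2) := funext hΦ
    rw [h]
    exact (hF₁meas.comp measurable_fst).prodMk hF₂meas
  have hf_ae_int : ∀ᵐ x : ℝ, Integrable fun y => f (x, y) := hf_prod_int.prod_right_ae
  -- rectangle computation
  have key : ∀ a b : ℝ, μ (Φ ⁻¹' (Set.Iic a ×ˢ Set.Iic b))
      = ENNReal.ofReal (c a) * ENNReal.ofReal (c b) := by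
    intro a b
    set A := {x : ℝ | F₁ x ≤ a} with hA
    have hAmeas : MeasurableSet A := measurableSet_le hF₁meas measurable_const
    set B : ℝ → Set ℝ := fun x => {y | F₂ x y ≤ b} with hB
    have hBmeas : ∀ x, MeasurableSet (B x) := fun x =>
      measurableSet_le (hF₂meas.comp measurable_prodMk_left) measurable_const
    have hS : Φ ⁻¹' (Set.Iic a ×ˢ Set.Iic b) = {p : ℝ × ℝ | p.1 ∈ A ∧ p.2 ∈ B p.1} := by
      ext p
      simp [hΦ p, Set.mem_prod, hA, hB]
    have hSmeas : MeasurableSet (Φ ⁻¹' (Set.Iic a ×ˢ Set.Iic b)) :=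
      hΦmeas (measurableSet_Iic.prod measurableSet_Iic)
    rw [hμ, withDensity_apply _ hSmeas, ← lintegral_indicator hSmeas,
      Measure.volume_eq_prod, lintegral_prod _ ((hf_meas.ennreal_ofReal.indicator hSmeas).aemeasurable)]
    have hinner : (fun x : ℝ => ∫⁻ y,
          (Φ ⁻¹' (Set.Iic a ×ˢ Set.Iic b)).indicator (fun p => ENNReal.ofReal (f p)) (x, y))
        =ᵐ[volume] fun x => A.indicator (fun x' => ENNReal.ofReal (c b * g x')) x := by
      filter_upwards [hf_ae_int] with x hx
      by_cases hxA : x ∈ A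
      · have h1 : ∀ y : ℝ, (Φ ⁻¹' (Set.Iic a ×ˢ Set.Iic b)).indicator
            (fun p => ENNReal.ofReal (f p)) (x, y)
            = (B x).indicator (fun y => ENNReal.ofReal (f (x, y))) y := by
          intro y
          rw [hS]
          by_cases hyB : y ∈ B x <;> simp [Set.indicator_apply, hxA, hyB]
        have hBx_int : ∫ y in B x, f (x, y) = c b * g x := by
          rcases (hg_nonneg x).eq_or_lt with hg0 | hgpos
          · have hzero : (fun t => f (x, t)) =ᵐ[(volume : Measure ℝ)] 0 := by
              rw [← integral_eq_zero_iff_of_nonneg (fun t => hf_nonneg _) hx, ← hg x, ← hg0]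
            rw [integral_congr_ae (ae_restrict_of_ae hzero)]
            simp [← hg0]
          · have hBeq : B x = {y : ℝ | (∫ t in Set.Iic y, f (x, t)) ≤ b * g x} := by
              ext y
              simp only [hB, Set.mem_setOf_eq, hF₂ x y, if_pos hgpos]
              rw [div_le_iff₀ hgpos]
            rw [hBeq]
            have haux := rosenblatt_aux (fun t => f (x, t)) (fun t => hf_nonneg _) hx (b * g x)
            rw [haux, ← hg x]
            simp only [hc]
            have hgx := hg_nonneg x
            rcases le_total b 0 with hb0 | hb0
            · rw [min_eq_left (by nlinarith), max_eq_left (by nlinarith),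
                min_eq_left (le_trans hb0 zero_le_one), max_eq_left hb0]
              ring
            · rcases le_total b 1 with hb1 | hb1
              · rw [min_eq_left (by nlinarith), max_eq_right (by positivity),
                  min_eq_left hb1, max_eq_right hb0]
              · rw [min_eq_right (by nlinarith), max_eq_right hgx,
                  min_eq_right hb1, max_eq_right zero_le_one]
                ring
        calc ∫⁻ y, (Φ ⁻¹' (Set.Iic a ×ˢ Set.Iic b)).indicator
              (fun p => ENNReal.ofReal (f p)) (x, y)
            = ∫⁻ y, (B x).indicator (fun y => ENNReal.ofReal (f (x, y))) y :=
              lintegral_congr h1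
          _ = ∫⁻ y in B x, ENNReal.ofReal (f (x, y)) := lintegral_indicator (hBmeas x) _
          _ = ENNReal.ofReal (∫ y in B x, f (x, y)) :=
              (ofReal_integral_eq_lintegral_ofReal hx.integrableOn
                (ae_restrict_of_ae (ae_of_all _ fun t => hf_nonneg _))).symm
          _ = ENNReal.ofReal (c b * g x) := by rw [hBx_int]
          _ = A.indicator (fun x' => ENNReal.ofReal (c b * g x')) x := by
              rw [Set.indicator_of_mem hxA]
      · have h0 : ∀ y : ℝ, (Φ ⁻¹' (Set.Iic a ×ˢ Set.Iic b)).indicator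
            (fun p => ENNReal.ofReal (f p)) (x, y) = 0 := by
          intro y
          rw [hS]
          simp [Set.indicator_apply, hxA]
        rw [Set.indicator_of_notMem hxA]
        simp only [h0]
        exact lintegral_zero
    rw [lintegral_congr_ae hinner, lintegral_indicator hAmeas]
    have hcgA : ∫ x in A, c b * g x = c b * ∫ x in A, g x := integral_const_mul _ _
    have hAg : ∫ x in A, g x = c a := by
      have hAeq : A = {x : ℝ | (∫ u in Set.Iic x, g u) ≤ a} := by
        ext x
        simp [hA, hF₁ x]
      rw [hAeq, rosenblatt_aux g hg_nonneg hg_int a, hg1]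
    calc ∫⁻ x in A, ENNReal.ofReal (c b * g x)
        = ENNReal.ofReal (∫ x in A, c b * g x) :=
          (ofReal_integral_eq_lintegral_ofReal ((hg_int.const_mul (c b)).integrableOn)
            (ae_restrict_of_ae (ae_of_all _ fun x => mul_nonneg (hc_nonneg b) (hg_nonneg x)))).symm
      _ = ENNReal.ofReal (c b * c a) := by rw [hcgA, hAg]
      _ = ENNReal.ofReal (c a) * ENNReal.ofReal (c b) := by
          rw [ENNReal.ofReal_mul (hc_nonneg b), mul_comm]
  -- extensionality via π-system of Iic-rectangles
  have hIicgen : MeasurableSpace.generateFrom (Set.range (Set.Iic : ℝ → Set ℝ))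
      = (inferInstance : MeasurableSpace ℝ) := by
    rw [BorelSpace.measurable_eq (α := ℝ)]
    exact (borel_eq_generateFrom_Iic ℝ).symm
  have hCS : IsCountablySpanning (Set.range (Set.Iic : ℝ → Set ℝ)) := by
    refine ⟨fun n => Set.Iic (n : ℝ), fun n => ⟨n, rfl⟩, ?_⟩
    ext x
    simp only [Set.mem_iUnion, Set.mem_Iic, Set.mem_univ, iff_true]
    exact exists_nat_ge x
  have hgen : (inferInstance : MeasurableSpace (ℝ × ℝ))
      = MeasurableSpace.generateFrom
        (Set.image2 (· ×ˢ ·) (Set.range Set.Iic) (Set.range Set.Iic)) :=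
    (generateFrom_eq_prod hIicgen hIicgen hCS hCS).symm
  haveI : IsProbabilityMeasure (Measure.map Φ μ) := Measure.isProbabilityMeasure_map hΦmeas.aemeasurable
  refine ext_of_generate_finite _ hgen (isPiSystem_Iic.prod isPiSystem_Iic) ?_ ?_
  · rintro _ ⟨s, ⟨a, rfl⟩, t, ⟨b, rfl⟩, rfl⟩
    rw [Measure.map_apply hΦmeas (measurableSet_Iic.prod measurableSet_Iic), key a b,
      Measure.restrict_apply (measurableSet_Iic.prod measurableSet_Iic),
      Set.prod_inter_prod, Measure.volume_eq_prod, Measure.prod_prod]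
    have hint : ∀ r : ℝ, Set.Iic r ∩ Set.Icc 0 1 = Set.Icc 0 (min r 1) := by
      intro r
      ext x
      simp only [Set.mem_inter_iff, Set.mem_Iic, Set.mem_Icc, le_min_iff]
      tauto
    have hofr : ∀ r : ℝ, ENNReal.ofReal (min r 1 - 0) = ENNReal.ofReal (c r) := by
      intro r
      rw [sub_zero]
      simp only [hc]
      rcases le_total 0 (min r 1) with h | h
      · rw [max_eq_right h]
      · rw [ENNReal.ofReal_of_nonpos h, max_eq_left h]
        simp
    rw [hint a, hint b, Real.volume_Icc, Real.volume_Icc, hofr a, hofr b]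
  · rw [measure_univ, Measure.restrict_apply_univ, Measure.volume_eq_prod, Measure.prod_prod,
      Real.volume_Icc]
    norm_num
end

section
/- Let (Ω, 𝓕, P) be a probability space carrying random variables X : Ω → ℝ^d, Z : Ω → {0,1}, and integrable real-valued random variables Y⁰, Y¹, and set Y = (1−Z)Y⁰ + Z·Y¹. Assume strong ignorability: the pair (Y⁰, Y¹) is conditionally independent of Z given the σ-algebra σ(X). Then the conditional expectations satisfy E[Y | σ(X,Z)] = E[Y⁰ | σ(X)] almost surely on the event {Z = 0}. -/
open MeasureTheory ProbabilityTheory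

lemma aux_setIntegral_condexp_of_condIndep
    {Ω : Type*} {m' : MeasurableSpace Ω} [mΩ : MeasurableSpace Ω] [StandardBorelSpace Ω]
    (P : Measure Ω) [IsProbabilityMeasure P] (hm' : m' ≤ mΩ)
    {W : Ω → ℝ × ℝ} {Z : Ω → ℝ} (hW : Measurable W) (hZ : Measurable Z)
    (hindep : CondIndepFun m' hm' W Z P)
    {t : Set ℝ} (ht : MeasurableSet t)
    {A : Set Ω} (hA : MeasurableSet[m'] A)
    {f : Ω → ℝ} (hf : Integrable f P)
    (hfm : AEStronglyMeasurable[MeasurableSpace.comap W inferInstance] f P) :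
    ∫ ω in A ∩ Z ⁻¹' t, f ω ∂P = ∫ ω in A ∩ Z ⁻¹' t, (P[f|m']) ω ∂P := by
  have hBamb : MeasurableSet (Z ⁻¹' t) := hZ ht
  have hmWle : MeasurableSpace.comap W inferInstance ≤ mΩ := hW.comap_le
  have hprod := (condIndepFun_iff_condExp_inter_preimage_eq_mul
    (μ := P) (hm' := hm') hW hZ).mp hindep
  have main : ∀ ⦃g : Ω → ℝ⦄, MemLp g 1 P →
      AEStronglyMeasurable[MeasurableSpace.comap W inferInstance] g P →
      ∫ ω in A ∩ Z ⁻¹' t, g ω ∂P = ∫ ω in A ∩ Z ⁻¹' t, (P[g|m']) ω ∂P := by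
    refine MemLp.induction_stronglyMeasurable hmWle ENNReal.one_ne_top
      (fun g => ∫ ω in A ∩ Z ⁻¹' t, g ω ∂P = ∫ ω in A ∩ Z ⁻¹' t, (P[g|m']) ω ∂P)
      ?_ ?_ ?_ ?_
    · rintro c s ⟨w, hw, rfl⟩ -
      have hSamb : MeasurableSet (W ⁻¹' w) := hW hw
      have h1B_int : Integrable ((Z ⁻¹' t).indicator fun _ => (1:ℝ)) P :=
        (integrable_const _).indicator hBamb
      have e1 : (P⟦W ⁻¹' w|m'⟧) * ((Z ⁻¹' t).indicator fun _ => (1:ℝ))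
          = (Z ⁻¹' t).indicator (P⟦W ⁻¹' w|m'⟧) := by
        ext ω; by_cases h : ω ∈ Z ⁻¹' t <;> simp [h]
      have hrB_int : Integrable ((P⟦W ⁻¹' w|m'⟧) * ((Z ⁻¹' t).indicator fun _ => (1:ℝ))) P := by
        rw [e1]; exact integrable_condExp.indicator hBamb
      have hpull : P[(P⟦W ⁻¹' w|m'⟧) * ((Z ⁻¹' t).indicator fun _ => (1:ℝ))|m']
          =ᵐ[P] (P⟦W ⁻¹' w|m'⟧) * P[(Z ⁻¹' t).indicator fun _ => (1:ℝ)|m'] :=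
        condExp_mul_of_stronglyMeasurable_left stronglyMeasurable_condExp hrB_int h1B_int
      have hI : ∫ ω in A ∩ Z ⁻¹' t, (P⟦W ⁻¹' w|m'⟧) ω ∂P
          = (P (A ∩ Z ⁻¹' t ∩ W ⁻¹' w)).toReal := by
        calc ∫ ω in A ∩ Z ⁻¹' t, (P⟦W ⁻¹' w|m'⟧) ω ∂P
            = ∫ ω in A, (Z ⁻¹' t).indicator (P⟦W ⁻¹' w|m'⟧) ω ∂P :=
              (setIntegral_indicator hBamb).symm
          _ = ∫ ω in A, ((P⟦W ⁻¹' w|m'⟧) * ((Z ⁻¹' t).indicator fun _ => (1:ℝ))) ω ∂P := by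
              rw [e1]
          _ = ∫ ω in A,
              (P[(P⟦W ⁻¹' w|m'⟧) * ((Z ⁻¹' t).indicator fun _ => (1:ℝ))|m']) ω ∂P :=
              (setIntegral_condExp hm' hrB_int hA).symm
          _ = ∫ ω in A, (P⟦W ⁻¹' w ∩ Z ⁻¹' t|m'⟧) ω ∂P := by
              refine integral_congr_ae (ae_restrict_of_ae ?_)
              filter_upwards [hpull, hprod w t hw ht] with ω h1 h2
              rw [h1, Pi.mul_apply, ← h2]
          _ = ∫ ω in A, (W ⁻¹' w ∩ Z ⁻¹' t).indicator (fun _ => (1:ℝ)) ω ∂P :=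
              setIntegral_condExp hm' ((integrable_const _).indicator (hSamb.inter hBamb)) hA
          _ = ∫ _ω in A ∩ (W ⁻¹' w ∩ Z ⁻¹' t), (1:ℝ) ∂P :=
              setIntegral_indicator (hSamb.inter hBamb)
          _ = (P (A ∩ Z ⁻¹' t ∩ W ⁻¹' w)).toReal := by
              rw [setIntegral_const, show A ∩ (W ⁻¹' w ∩ Z ⁻¹' t) = A ∩ Z ⁻¹' t ∩ W ⁻¹' w by
                ext ω; simp only [Set.mem_inter_iff]; tauto]
              simp [measureReal_def]
      have hindic : (W ⁻¹' w).indicator (fun _ => c) = c • (W ⁻¹' w).indicator (fun _ => (1:ℝ)) := by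
        ext ω; by_cases h : ω ∈ W ⁻¹' w <;> simp [h]
      calc ∫ ω in A ∩ Z ⁻¹' t, (W ⁻¹' w).indicator (fun _ => c) ω ∂P
          = ∫ _ω in A ∩ Z ⁻¹' t ∩ W ⁻¹' w, c ∂P := setIntegral_indicator hSamb
        _ = (P (A ∩ Z ⁻¹' t ∩ W ⁻¹' w)).toReal * c := by rw [setIntegral_const]; ring_nf; rfl
        _ = c * (P (A ∩ Z ⁻¹' t ∩ W ⁻¹' w)).toReal := mul_comm _ _
        _ = ∫ ω in A ∩ Z ⁻¹' t, (P[(W ⁻¹' w).indicator (fun _ => c)|m']) ω ∂P := by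
            have hsm := condExp_smul (μ := P) (m := m') c ((W ⁻¹' w).indicator (fun _ => (1:ℝ)))
            rw [← hindic] at hsm
            have hc : ∫ ω in A ∩ Z ⁻¹' t, (P[(W ⁻¹' w).indicator (fun _ => c)|m']) ω ∂P
                = ∫ ω in A ∩ Z ⁻¹' t, c • (P[(W ⁻¹' w).indicator (fun _ => (1:ℝ))|m']) ω ∂P :=
              integral_congr_ae (ae_restrict_of_ae (hsm.mono fun ω hω => by rw [hω]; rfl))
            rw [hc, integral_smul, smul_eq_mul, hI]
    · intro u v _hdisj hu hv _hum _hvm hQu hQv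
      have hui := memLp_one_iff_integrable.mp hu
      have hvi := memLp_one_iff_integrable.mp hv
      have h2 : ∫ ω in A ∩ Z ⁻¹' t, (P[u + v|m']) ω ∂P
          = ∫ ω in A ∩ Z ⁻¹' t, ((P[u|m']) ω + (P[v|m']) ω) ∂P := by
        refine integral_congr_ae (ae_restrict_of_ae ?_)
        filter_upwards [condExp_add hui hvi m'] with ω hω
        rw [hω]; rfl
      have h1 : ∫ ω in A ∩ Z ⁻¹' t, (u + v) ω ∂P
          = ∫ ω in A ∩ Z ⁻¹' t, u ω ∂P + ∫ ω in A ∩ Z ⁻¹' t, v ω ∂P := by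
        simp only [Pi.add_apply]
        exact integral_add hui.integrableOn hvi.integrableOn
      rw [h1, h2, integral_add integrable_condExp.integrableOn integrable_condExp.integrableOn,
        hQu, hQv]
    · have hset : ∀ u : Lp ℝ 1 P, ∫ ω in A ∩ Z ⁻¹' t, (P[u|m']) ω ∂P
          = ∫ ω in A ∩ Z ⁻¹' t, (condExpL1CLM ℝ hm' P u) ω ∂P := by
        intro u
        refine integral_congr_ae (ae_restrict_of_ae ?_)
        have h := condExp_ae_eq_condExpL1CLM hm' (L1.integrable_coeFn u)
        rwa [Integrable.toL1_coeFn] at h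
      have heq1 : (fun g : lpMeas ℝ ℝ (MeasurableSpace.comap W inferInstance) 1 P =>
            ∫ ω in A ∩ Z ⁻¹' t, (g : Ω → ℝ) ω ∂P)
          = (fun u : Lp ℝ 1 P => ∫ ω in A ∩ Z ⁻¹' t, u ω ∂P) ∘
            (Submodule.subtypeL (lpMeas ℝ ℝ (MeasurableSpace.comap W inferInstance) 1 P)) := by
        refine funext fun g => integral_congr_ae (ae_restrict_of_ae ?_)
        simp_rw [Submodule.coe_subtypeL', Submodule.coe_subtype]
        exact Filter.Eventually.of_forall fun _ => trivial
      have heq2 : (fun g : lpMeas ℝ ℝ (MeasurableSpace.comap W inferInstance) 1 P =>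
            ∫ ω in A ∩ Z ⁻¹' t, (P[(g : Ω → ℝ)|m']) ω ∂P)
          = (fun u : Lp ℝ 1 P => ∫ ω in A ∩ Z ⁻¹' t, (condExpL1CLM ℝ hm' P u) ω ∂P) ∘
            (Submodule.subtypeL (lpMeas ℝ ℝ (MeasurableSpace.comap W inferInstance) 1 P)) := by
        refine funext fun g => ?_
        exact hset _
      refine isClosed_eq ?_ ?_
      · rw [heq1]
        exact (continuous_setIntegral _).comp (ContinuousLinearMap.continuous _)
      · rw [heq2]
        exact ((continuous_setIntegral _).comp (condExpL1CLM ℝ hm' P).continuous).comp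
          (ContinuousLinearMap.continuous _)
    · intro u v huv hu hQu
      have e1 : ∫ ω in A ∩ Z ⁻¹' t, v ω ∂P = ∫ ω in A ∩ Z ⁻¹' t, u ω ∂P :=
        integral_congr_ae (ae_restrict_of_ae huv.symm)
      have e2 : ∫ ω in A ∩ Z ⁻¹' t, (P[v|m']) ω ∂P = ∫ ω in A ∩ Z ⁻¹' t, (P[u|m']) ω ∂P :=
        integral_congr_ae (ae_restrict_of_ae (condExp_congr_ae huv.symm))
      rw [e1, e2, hQu]
  exact main (memLp_one_iff_integrable.mpr hf) hfm

/-- **Identification of the control response under strong ignorability.**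
In the potential-outcome model with observed outcome `Y = (1−Z)Y⁰ + Z·Y¹` and strong
ignorability (`(Y⁰,Y¹)` conditionally independent of `Z` given `σ(X)`), the conditional
expectation of `Y` given `σ(X,Z)` coincides with `E[Y⁰ | σ(X)]` almost surely on `{Z = 0}`. -/
theorem stmt_2 {Ω : Type*} [MeasurableSpace Ω] [StandardBorelSpace Ω] [Nonempty Ω]
    (P : Measure Ω) [IsProbabilityMeasure P] {d : ℕ}
    (X : Ω → EuclideanSpace ℝ (Fin d)) (Z : Ω → ℝ) (Y0 Y1 Y : Ω → ℝ)
    (hX : Measurable X) (hZ : Measurable Z) (hY0m : Measurable Y0) (hY1m : Measurable Y1)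
    (hZ01 : ∀ ω, Z ω = 0 ∨ Z ω = 1)
    (hY0int : Integrable Y0 P) (hY1int : Integrable Y1 P)
    (hY : ∀ ω, Y ω = (1 - Z ω) * Y0 ω + Z ω * Y1 ω)
    (hignor : CondIndepFun (MeasurableSpace.comap X inferInstance) hX.comap_le
      (fun ω => (Y0 ω, Y1 ω)) Z P) :
    ∀ᵐ ω ∂P, Z ω = 0 →
      (P[Y | MeasurableSpace.comap (fun ω => (X ω, Z ω)) inferInstance]) ω
        = (P[Y0 | MeasurableSpace.comap X inferInstance]) ω := by
  have hpairm : Measurable (fun ω => (X ω, Z ω)) := hX.prodMk hZ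
  have hm : MeasurableSpace.comap (fun ω => (X ω, Z ω)) inferInstance ≤ ‹MeasurableSpace Ω› :=
    hpairm.comap_le
  have hW : Measurable (fun ω => (Y0 ω, Y1 ω)) := hY0m.prodMk hY1m
  have hBamb : MeasurableSet (Z ⁻¹' {(0:ℝ)}) := hZ (measurableSet_singleton 0)
  have hBm : MeasurableSet[MeasurableSpace.comap (fun ω => (X ω, Z ω)) inferInstance]
      (Z ⁻¹' {(0:ℝ)}) :=
    ⟨Set.univ ×ˢ ({(0:ℝ)} : Set ℝ), MeasurableSet.univ.prod (measurableSet_singleton 0),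
      by ext ω; simp [eq_comm]⟩
  have hmXm : MeasurableSpace.comap X inferInstance
      ≤ MeasurableSpace.comap (fun ω => (X ω, Z ω)) inferInstance := by
    rintro s ⟨u, hu, rfl⟩
    exact ⟨u ×ˢ Set.univ, hu.prod MeasurableSet.univ, by ext ω; simp⟩
  have hY0W : AEStronglyMeasurable[
      (MeasurableSpace.comap (fun ω => (Y0 ω, Y1 ω)) inferInstance)] Y0 P := by
    have h1 : Measurable[MeasurableSpace.comap (fun ω => (Y0 ω, Y1 ω)) inferInstance]
        (fun ω => (Y0 ω, Y1 ω)) := measurable_iff_comap_le.mpr le_rfl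
    exact (Measurable.stronglyMeasurable (measurable_fst.comp h1)).aestronglyMeasurable
  have crux : ∀ u : Set (EuclideanSpace ℝ (Fin d)), MeasurableSet u →
      ∫ ω in X ⁻¹' u ∩ Z ⁻¹' {(0:ℝ)}, Y0 ω ∂P
        = ∫ ω in X ⁻¹' u ∩ Z ⁻¹' {(0:ℝ)},
            (P[Y0|MeasurableSpace.comap X inferInstance]) ω ∂P :=
    fun u hu => aux_setIntegral_condexp_of_condIndep P hX.comap_le hW hZ hignor
      (measurableSet_singleton 0) ⟨u, hu, rfl⟩ hY0int hY0W
  have hgen : MeasurableSpace.comap (fun ω => (X ω, Z ω)) inferInstance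
      = MeasurableSpace.generateFrom
        {s | ∃ u v, MeasurableSet u ∧ MeasurableSet v ∧ s = X ⁻¹' u ∩ Z ⁻¹' v} := by
    conv_lhs => rw [show (inferInstance : MeasurableSpace (EuclideanSpace ℝ (Fin d) × ℝ))
      = MeasurableSpace.generateFrom
          (Set.image2 (· ×ˢ ·) {s | MeasurableSet s} {t | MeasurableSet t})
      from generateFrom_prod.symm]
    rw [MeasurableSpace.comap_generateFrom]
    congr 1
    ext S
    constructor
    · rintro ⟨T, hT, rfl⟩
      obtain ⟨u, hu, v, hv, rfl⟩ := hT
      exact ⟨u, v, hu, hv, by ext ω; simp [Set.mem_prod]⟩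
    · rintro ⟨u, v, hu, hv, rfl⟩
      exact ⟨u ×ˢ v, Set.mem_image2_of_mem hu hv, by ext ω; simp [Set.mem_prod]⟩
  have hpi : IsPiSystem
      {s | ∃ u v, MeasurableSet u ∧ MeasurableSet v ∧ s = X ⁻¹' u ∩ Z ⁻¹' v} := by
    rintro S ⟨u₁, v₁, hu₁, hv₁, rfl⟩ T ⟨u₂, v₂, hu₂, hv₂, rfl⟩ -
    exact ⟨u₁ ∩ u₂, v₁ ∩ v₂, hu₁.inter hu₂, hv₁.inter hv₂,
      by ext ω; simp only [Set.mem_inter_iff, Set.mem_preimage]; tauto⟩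
  have hg0indint : Integrable
      ((Z ⁻¹' {(0:ℝ)}).indicator (P[Y0|MeasurableSpace.comap X inferInstance])) P :=
    integrable_condExp.indicator hBamb
  have hY0indint : Integrable ((Z ⁻¹' {(0:ℝ)}).indicator Y0) P := hY0int.indicator hBamb
  have htot : ∫ ω, (Z ⁻¹' {(0:ℝ)}).indicator
        (P[Y0|MeasurableSpace.comap X inferInstance]) ω ∂P
      = ∫ ω, (Z ⁻¹' {(0:ℝ)}).indicator Y0 ω ∂P := by
    rw [integral_indicator hBamb, integral_indicator hBamb]
    have h := crux Set.univ MeasurableSet.univ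
    simpa using h.symm
  have key : ∀ s, MeasurableSet[MeasurableSpace.comap (fun ω => (X ω, Z ω)) inferInstance] s →
      ∫ ω in s, (Z ⁻¹' {(0:ℝ)}).indicator
          (P[Y0|MeasurableSpace.comap X inferInstance]) ω ∂P
        = ∫ ω in s, (Z ⁻¹' {(0:ℝ)}).indicator Y0 ω ∂P := by
    intro s hs
    refine MeasurableSpace.induction_on_inter
      (C := fun s _ => ∫ ω in s, (Z ⁻¹' {(0:ℝ)}).indicator
          (P[Y0|MeasurableSpace.comap X inferInstance]) ω ∂P
        = ∫ ω in s, (Z ⁻¹' {(0:ℝ)}).indicator Y0 ω ∂P)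
      (s := {s | ∃ u v, MeasurableSet u ∧ MeasurableSet v ∧ s = X ⁻¹' u ∩ Z ⁻¹' v})
      (m := MeasurableSpace.comap (fun ω => (X ω, Z ω)) inferInstance)
      hgen hpi ?_ ?_ ?_ ?_ s hs
    · simp
    · rintro T ⟨u, v, hu, hv, rfl⟩
      rw [setIntegral_indicator hBamb, setIntegral_indicator hBamb]
      have hsB : X ⁻¹' u ∩ Z ⁻¹' v ∩ Z ⁻¹' {(0:ℝ)} = X ⁻¹' u ∩ Z ⁻¹' (v ∩ {(0:ℝ)}) := by
        ext ω; simp only [Set.mem_inter_iff, Set.mem_preimage]; tauto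
      by_cases h0 : (0:ℝ) ∈ v
      · have hv0 : v ∩ {(0:ℝ)} = {(0:ℝ)} :=
          Set.inter_eq_self_of_subset_right (Set.singleton_subset_iff.mpr h0)
        rw [hsB, hv0]
        exact (crux u hu).symm
      · have hv0 : v ∩ {(0:ℝ)} = ∅ := by
          ext x; simp only [Set.mem_inter_iff, Set.mem_singleton_iff, Set.mem_empty_iff_false,
            iff_false, not_and]
          rintro hx rfl; exact h0 hx
        rw [hsB, hv0]
        simp
    · intro T hTm hQT
      have hTamb : MeasurableSet T := hm _ hTm
      have h1 := integral_add_compl hTamb hg0indint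
      have h2 := integral_add_compl hTamb hY0indint
      linarith
    · intro g hdisj hgm hQ
      rw [integral_iUnion (fun i => hm _ (hgm i)) hdisj hg0indint.integrableOn,
        integral_iUnion (fun i => hm _ (hgm i)) hdisj hY0indint.integrableOn]
      exact tsum_congr hQ
  have hA3 : (Z ⁻¹' {(0:ℝ)}).indicator (P[Y0|MeasurableSpace.comap X inferInstance])
      =ᵐ[P] P[(Z ⁻¹' {(0:ℝ)}).indicator Y0 |
        MeasurableSpace.comap (fun ω => (X ω, Z ω)) inferInstance] :=
    ae_eq_condExp_of_forall_setIntegral_eq hm hY0indint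
      (fun s _ _ => hg0indint.integrableOn)
      (fun s hs _ => key s hs)
      (((stronglyMeasurable_condExp.mono hmXm).indicator hBm).aestronglyMeasurable)
  have hYint : Integrable Y P := by
    have h0 : Integrable (fun ω => (1 - Z ω) * Y0 ω) P :=
      hY0int.bdd_mul ((measurable_const.sub hZ).aestronglyMeasurable)
        (c := 1) (Filter.Eventually.of_forall fun ω => by rcases hZ01 ω with h | h <;> simp [h])
    have h1 : Integrable (fun ω => Z ω * Y1 ω) P :=
      hY1int.bdd_mul hZ.aestronglyMeasurable
        (c := 1) (Filter.Eventually.of_forall fun ω => by rcases hZ01 ω with h | h <;> simp [h])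
    have hYe : Y = fun ω => (1 - Z ω) * Y0 ω + Z ω * Y1 ω := funext hY
    rw [hYe]; exact h0.add h1
  have hA2 : (Z ⁻¹' {(0:ℝ)}).indicator Y = (Z ⁻¹' {(0:ℝ)}).indicator Y0 := by
    funext ω
    by_cases hω : ω ∈ Z ⁻¹' {(0:ℝ)}
    · have hz : Z ω = 0 := hω
      rw [Set.indicator_of_mem hω, Set.indicator_of_mem hω, hY ω, hz]; ring
    · rw [Set.indicator_of_notMem hω, Set.indicator_of_notMem hω]
  have hA1 : P[(Z ⁻¹' {(0:ℝ)}).indicator Y |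
        MeasurableSpace.comap (fun ω => (X ω, Z ω)) inferInstance]
      =ᵐ[P] (Z ⁻¹' {(0:ℝ)}).indicator
        (P[Y | MeasurableSpace.comap (fun ω => (X ω, Z ω)) inferInstance]) :=
    condExp_indicator hYint hBm
  have hfinal : (Z ⁻¹' {(0:ℝ)}).indicator
        (P[Y | MeasurableSpace.comap (fun ω => (X ω, Z ω)) inferInstance])
      =ᵐ[P] (Z ⁻¹' {(0:ℝ)}).indicator (P[Y0|MeasurableSpace.comap X inferInstance]) := by
    refine hA1.symm.trans ?_
    rw [hA2]
    exact hA3.symm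
  filter_upwards [hfinal] with ω hω hz
  have hωB : ω ∈ Z ⁻¹' {(0:ℝ)} := by simpa using hz
  rw [Set.indicator_of_mem hωB, Set.indicator_of_mem hωB] at hω
  exact hω
end

section
/- Let d ≥ 1, α, β ∈ (0,1], and M, M' > 0. Let μ : ℝ^d → ℝ be bounded, measurable and (M,α)-Hölder; let g : ℝ^d → ℝ be bounded, measurable, (M',β)-Hölder, and vanish outside a compact set S of finite Lebesgue measure λ(S). Let K : ℝ^d → ℝ be integrable with K(−u) = K(u) for all u, ∫_{ℝ^d} K(u) du = 1, and κ := ∫_{ℝ^d} ‖u‖^{α+β} |K(u)| du < ∞. Then for every h > 0, | ∫_{ℝ^d} ∫_{ℝ^d} μ(x) h^{−d} K((x−y)/h) g(y) dy dx − ∫_{ℝ^d} μ(x) g(x) dx | ≤ M·M'·κ·λ(S)·h^{α+β}. -/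
open MeasureTheory

/-- **Bias bound for the bilinear kernel-smoothed functional.**
If `μ` is `(M,α)`-Hölder, `g` is `(M',β)`-Hölder with compact support `S`, and `K` is a
symmetric integrable kernel with `∫ K = 1` and `κ = ∫ ‖u‖^{α+β} |K u| du < ∞`, then for
every bandwidth `h > 0` the smoothing bias of the bilinear functional satisfies
`|∬ μ(x) K_h(x−y) g(y) dy dx − ∫ μ g| ≤ M·M'·κ·λ(S)·h^{α+β}`. -/
theorem stmt_3 (d : ℕ) (hd : 1 ≤ d) (α β M M' : ℝ)
    (hα : α ∈ Set.Ioc (0 : ℝ) 1) (hβ : β ∈ Set.Ioc (0 : ℝ) 1)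
    (hM : 0 < M) (hM' : 0 < M')
    (μ g K : EuclideanSpace ℝ (Fin d) → ℝ)
    (hμmeas : Measurable μ) (hμbdd : ∃ B, ∀ x, |μ x| ≤ B)
    (hμHolder : ∀ x y, |μ x - μ y| ≤ M * ‖x - y‖ ^ α)
    (hgmeas : Measurable g) (hgbdd : ∃ B, ∀ x, |g x| ≤ B)
    (hgHolder : ∀ x y, |g x - g y| ≤ M' * ‖x - y‖ ^ β)
    (S : Set (EuclideanSpace ℝ (Fin d))) (hScompact : IsCompact S)
    (hgS : ∀ x ∉ S, g x = 0)
    (hKint : Integrable K volume) (hKsymm : ∀ u, K (-u) = K u)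
    (hKone : ∫ u, K u = 1)
    (κ : ℝ) (hκ : κ = ∫ u, ‖u‖ ^ (α + β) * |K u|)
    (hκint : Integrable (fun u => ‖u‖ ^ (α + β) * |K u|) volume) :
    ∀ h : ℝ, 0 < h →
      |(∫ x, ∫ y, μ x * ((1 / h ^ d) * K (h⁻¹ • (x - y))) * g y) - ∫ x, μ x * g x|
        ≤ M * M' * κ * (volume S).toReal * h ^ (α + β) := by
  intro h hh
  obtain ⟨Bμ, hBμ0⟩ := hμbdd
  obtain ⟨Bg, hBg0⟩ := hgbdd
  set B : ℝ := max Bμ 0 with hBdef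
  have hB0 : 0 ≤ B := le_max_right _ _
  have hBμ : ∀ x, |μ x| ≤ B := fun x => le_trans (hBμ0 x) (le_max_left _ _)
  have hα0 := hα.1
  have hβ0 := hβ.1
  have hαβ : 0 < α + β := by linarith
  have hS : MeasurableSet S := hScompact.measurableSet
  have hSfin : volume S < ⊤ := hScompact.measure_lt_top
  -- integrability of g
  have hgind : Integrable (S.indicator fun _ => Bg) volume := by
    rw [integrable_indicator_iff hS]
    exact integrableOn_const hSfin.ne
  have hgint : Integrable g volume := by
    refine hgind.mono' hgmeas.aestronglyMeasurable (Filter.Eventually.of_forall fun x => ?_)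
    by_cases hx : x ∈ S
    · simpa [Set.indicator_of_mem hx, Real.norm_eq_abs] using hBg0 x
    · simp [Set.indicator_of_notMem hx, hgS x hx]
  have hμgint : Integrable (fun x => μ x * g x) volume :=
    hgint.bdd_mul hμmeas.aestronglyMeasurable (c := B) (Filter.Eventually.of_forall fun x => by simpa [Real.norm_eq_abs] using hBμ x)
  -- T u = ∫ μ x * g (x - h u)
  set T : EuclideanSpace ℝ (Fin d) → ℝ := fun u => ∫ x, μ x * g (x - h • u) with hTdef
  have hT0 : T 0 = ∫ x, μ x * g x := by simp [hTdef]
  have hhd : (0:ℝ) < h ^ d := pow_pos hh d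
  -- Step 1: rewrite the double integral as ∫ u, K u * T u
  have key : (∫ x, ∫ y, μ x * ((1 / h ^ d) * K (h⁻¹ • (x - y))) * g y)
      = ∫ u, K u * T u := by
    have step1 : ∀ x : EuclideanSpace ℝ (Fin d),
        (∫ y, μ x * ((1 / h ^ d) * K (h⁻¹ • (x - y))) * g y)
        = ∫ v, μ x * ((1 / h ^ d) * K (h⁻¹ • v)) * g (x - v) := by
      intro x
      set F : EuclideanSpace ℝ (Fin d) → ℝ :=
        fun v => μ x * ((1 / h ^ d) * K (h⁻¹ • v)) * g (x - v) with hF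
      calc (∫ y, μ x * ((1 / h ^ d) * K (h⁻¹ • (x - y))) * g y)
          = ∫ y, F (-(y - x)) := by
            congr 1; funext y; simp [hF, neg_sub, sub_sub_cancel]
        _ = ∫ y, F (-y) := integral_sub_right_eq_self (fun y => F (-y)) x
        _ = ∫ v, F v := integral_neg_eq_self F volume
    have hprod : Integrable (Function.uncurry fun x v =>
        μ x * ((1 / h ^ d) * K (h⁻¹ • v)) * g (x - v)) (volume.prod volume) := by
      have hKh : Integrable (fun v => (1 / h ^ d) * K (h⁻¹ • v)) volume :=
        (hKint.comp_smul (inv_ne_zero hh.ne')).const_mul _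
      have base := hKh.convolution_integrand (ContinuousLinearMap.mul ℝ ℝ) hgint
      have base' : Integrable (fun p : EuclideanSpace ℝ (Fin d) × EuclideanSpace ℝ (Fin d) =>
          ((1 / h ^ d) * K (h⁻¹ • p.2)) * g (p.1 - p.2)) (volume.prod volume) := by
        simpa using base
      have := base'.bdd_mul (hμmeas.comp measurable_fst).aestronglyMeasurable
        (c := B) (Filter.Eventually.of_forall fun p => by simpa [Real.norm_eq_abs] using hBμ p.1)
      refine this.congr (Filter.Eventually.of_forall fun p => ?_)
      simp [Function.uncurry, mul_assoc]
    have swap := integral_integral_swap hprod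
    have step3 : ∀ v : EuclideanSpace ℝ (Fin d),
        (∫ x, μ x * ((1 / h ^ d) * K (h⁻¹ • v)) * g (x - v))
        = (1 / h ^ d) * K (h⁻¹ • v) * ∫ x, μ x * g (x - v) := by
      intro v
      rw [← integral_const_mul]
      congr 1; funext x; ring
    calc (∫ x, ∫ y, μ x * ((1 / h ^ d) * K (h⁻¹ • (x - y))) * g y)
        = ∫ x, ∫ v, μ x * ((1 / h ^ d) * K (h⁻¹ • v)) * g (x - v) := by
          congr 1; funext x; exact step1 x
      _ = ∫ v, ∫ x, μ x * ((1 / h ^ d) * K (h⁻¹ • v)) * g (x - v) := swap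
      _ = ∫ v, (1 / h ^ d) * K (h⁻¹ • v) * ∫ x, μ x * g (x - v) := by
          congr 1; funext v; exact step3 v
      _ = (h ^ d) • ∫ u, (fun v => (1 / h ^ d) * K (h⁻¹ • v) * ∫ x, μ x * g (x - v)) (h • u) := by
          rw [Measure.integral_comp_smul_of_nonneg volume
            (fun v => (1 / h ^ d) * K (h⁻¹ • v) * ∫ x, μ x * g (x - v)) h (hR := hh.le),
            finrank_euclideanSpace_fin, smul_smul, mul_inv_cancel₀ (ne_of_gt hhd), one_smul]
      _ = ∫ u, K u * T u := by
          simp only [smul_eq_mul, ← integral_const_mul]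
          congr 1; funext u
          rw [inv_smul_smul₀ hh.ne']
          have heq : ∀ a : EuclideanSpace ℝ (Fin d),
              h ^ d * (1 / h ^ d * K u * (μ a * g (a - h • u)))
              = K u * (μ a * g (a - h • u)) := by
            intro a; field_simp
          simp only [heq]
          rw [integral_const_mul]
  rw [key, ← hT0]
  -- measurability and boundedness of T
  have hTmeas : StronglyMeasurable T := by
    have : StronglyMeasurable (fun p : EuclideanSpace ℝ (Fin d) × EuclideanSpace ℝ (Fin d) =>
        μ p.2 * g (p.2 - h • p.1)) :=
      ((hμmeas.comp measurable_snd).mul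
        (hgmeas.comp (measurable_snd.sub (measurable_fst.const_smul h)))).stronglyMeasurable
    exact this.integral_prod_right'
  have hTbound : ∀ u, |T u| ≤ B * ∫ x, |g x| := by
    intro u
    have hbint : Integrable (fun x => B * |g (x - h • u)|) volume := by
      have := (hgint.comp_sub_right (h • u)).norm
      simpa [Real.norm_eq_abs] using this.const_mul B
    have hle := norm_integral_le_of_norm_le hbint (Filter.Eventually.of_forall fun x => by
      rw [Real.norm_eq_abs, abs_mul]
      exact mul_le_mul_of_nonneg_right (hBμ x) (abs_nonneg _))
    rw [Real.norm_eq_abs] at hle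
    refine hle.trans (le_of_eq ?_)
    rw [integral_const_mul]
    congr 1
    exact integral_sub_right_eq_self (fun x => |g x|) (h • u)
  -- integrability of the various integrands in u
  have hKT : Integrable (fun u => K u * T u) volume := by
    refine Integrable.mono' (hKint.norm.mul_const (B * ∫ x, |g x|))
      (hKint.aestronglyMeasurable.mul hTmeas.aestronglyMeasurable)
      (Filter.Eventually.of_forall fun u => ?_)
    rw [Real.norm_eq_abs, abs_mul, Real.norm_eq_abs]
    exact mul_le_mul_of_nonneg_left (hTbound u) (abs_nonneg _)
  have hKT0 : Integrable (fun u => K u * T 0) volume := hKint.mul_const _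
  have hKTneg : Integrable (fun u => K u * T (-u)) volume := by
    have := hKT.comp_neg
    refine this.congr (Filter.Eventually.of_forall fun u => ?_)
    simp [hKsymm u]
  -- A = ∫ K u * (T u - T 0)
  have hA : (∫ u, K u * T u) - T 0 = ∫ u, K u * (T u - T 0) := by
    have : (∫ u, K u * (T u - T 0)) = (∫ u, K u * T u) - ∫ u, K u * T 0 := by
      rw [← integral_sub hKT hKT0]
      congr 1; funext u; ring
    rw [this, integral_mul_const, hKone, one_mul]
  rw [hA]
  -- symmetrization
  have hsymm : (∫ u, K u * (T u - T 0)) = ∫ u, K u * (T (-u) - T 0) := by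
    conv_lhs => rw [← integral_neg_eq_self (fun u => K u * (T u - T 0)) volume]
    congr 1; funext u; rw [hKsymm u]
  have hKT1 : Integrable (fun u => K u * (T u - T 0)) volume :=
    (hKT.sub hKT0).congr (Filter.Eventually.of_forall fun u => by
      simp only [Pi.sub_apply]; ring)
  have hKT2 : Integrable (fun u => K u * (T (-u) - T 0)) volume :=
    (hKTneg.sub hKT0).congr (Filter.Eventually.of_forall fun u => by
      simp only [Pi.sub_apply]; ring)
  have htwo : (2:ℝ) * (∫ u, K u * (T u - T 0)) = ∫ u, K u * (T u + T (-u) - 2 * T 0) := by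
    have he : (fun u => K u * (T u + T (-u) - 2 * T 0))
        = fun u => K u * (T u - T 0) + K u * (T (-u) - T 0) := by
      funext u; ring
    rw [he, integral_add hKT1 hKT2, ← hsymm]; ring
  -- the symmetrized increment representation
  have hW : ∀ u : EuclideanSpace ℝ (Fin d), T u + T (-u) - 2 * T 0
      = ∫ x, (μ x - μ (x - h • u)) * (g (x - h • u) - g x) := by
    intro u
    have I1 : Integrable (fun x => μ x * g (x - h • u)) volume :=
      (hgint.comp_sub_right (h • u)).bdd_mul hμmeas.aestronglyMeasurable
        (c := B) (Filter.Eventually.of_forall fun x => by simpa [Real.norm_eq_abs] using hBμ x)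
    have I2 : Integrable (fun x => μ (x - h • u) * g x) volume :=
      hgint.bdd_mul ((hμmeas.comp (measurable_id.sub measurable_const)).aestronglyMeasurable)
        (c := B) (Filter.Eventually.of_forall fun x => by simpa [Real.norm_eq_abs] using hBμ (x - h • u))
    have I3 : Integrable (fun x => μ x * g x) volume := hμgint
    have I4 : Integrable (fun x => μ (x - h • u) * g (x - h • u)) volume :=
      hμgint.comp_sub_right (h • u)
    have e2 : (∫ x, μ (x - h • u) * g x) = T (-u) := by
      have := integral_sub_right_eq_self (μ := (volume : Measure (EuclideanSpace ℝ (Fin d))))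
        (fun x => μ x * g (x + h • u)) (h • u)
      simp only [sub_add_cancel] at this
      rw [this, hTdef]
      simp [smul_neg, sub_neg_eq_add]
    have e4 : (∫ x, μ (x - h • u) * g (x - h • u)) = T 0 := by
      rw [integral_sub_right_eq_self (fun x => μ x * g x) (h • u), hT0]
    calc T u + T (-u) - 2 * T 0
        = ((∫ x, μ x * g (x - h • u)) + ∫ x, μ (x - h • u) * g x)
          - ((∫ x, μ x * g x) + ∫ x, μ (x - h • u) * g (x - h • u)) := by
          rw [e2, e4, hT0, hTdef]; ring
      _ = ∫ x, (μ x * g (x - h • u) + μ (x - h • u) * g x)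
          - (μ x * g x + μ (x - h • u) * g (x - h • u)) := by
          have I12 : Integrable
              (fun x => μ x * g (x - h • u) + μ (x - h • u) * g x) volume := I1.add I2
          have I34 : Integrable
              (fun x => μ x * g x + μ (x - h • u) * g (x - h • u)) volume := I3.add I4
          rw [integral_sub I12 I34, integral_add I1 I2, integral_add I3 I4]
      _ = ∫ x, (μ x - μ (x - h • u)) * (g (x - h • u) - g x) := by
          congr 1; funext x; ring
  -- bound on the symmetrized increment
  have hWbound : ∀ u : EuclideanSpace ℝ (Fin d), |T u + T (-u) - 2 * T 0|
      ≤ M * M' * (h * ‖u‖) ^ (α + β) * (2 * (volume S).toReal) := by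
    intro u
    rw [hW u]
    set c : ℝ := M * M' * (h * ‖u‖) ^ (α + β) with hc
    have hc0 : 0 ≤ c := by
      apply mul_nonneg (mul_nonneg hM.le hM'.le)
      exact Real.rpow_nonneg (mul_nonneg hh.le (norm_nonneg u)) _
    set U : Set (EuclideanSpace ℝ (Fin d)) := S ∪ ((fun x => x - h • u) ⁻¹' S) with hU
    have hUmeas : MeasurableSet U :=
      hS.union ((measurable_id.sub measurable_const) hS)
    have hUvol : volume U ≤ 2 * volume S := by
      refine (measure_union_le _ _).trans (le_of_eq ?_)
      have : volume ((fun x => x - h • u) ⁻¹' S) = volume S := by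
        simp only [sub_eq_add_neg]
        exact measure_preimage_add_right volume (-(h • u)) S
      rw [this, two_mul]
    have hUfin : volume U < ⊤ :=
      lt_of_le_of_lt hUvol (ENNReal.mul_lt_top (by norm_num) hSfin)
    have hbint : Integrable (U.indicator fun _ => c) volume := by
      rw [integrable_indicator_iff hUmeas]
      exact integrableOn_const hUfin.ne
    have hptwise : ∀ x, ‖(μ x - μ (x - h • u)) * (g (x - h • u) - g x)‖
        ≤ U.indicator (fun _ => c) x := by
      intro x
      by_cases hx : x ∈ U
      · rw [Set.indicator_of_mem hx, Real.norm_eq_abs, abs_mul]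
        have h1 : |μ x - μ (x - h • u)| ≤ M * (h * ‖u‖) ^ α := by
          have := hμHolder x (x - h • u)
          simpa [sub_sub_cancel, norm_smul, abs_of_pos hh] using this
        have h2 : |g (x - h • u) - g x| ≤ M' * (h * ‖u‖) ^ β := by
          have := hgHolder (x - h • u) x
          simpa [sub_sub_cancel_left, norm_neg, norm_smul, abs_of_pos hh] using this
        have h3 := mul_le_mul h1 h2 (abs_nonneg _)
          (mul_nonneg hM.le (Real.rpow_nonneg (mul_nonneg hh.le (norm_nonneg u)) _))
        refine h3.trans (le_of_eq ?_)
        rw [hc, Real.rpow_add' (mul_nonneg hh.le (norm_nonneg u)) (ne_of_gt hαβ)]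
        ring
      · have hx1 : x ∉ S := fun hmem => hx (Set.mem_union_left _ hmem)
        have hx2 : x - h • u ∉ S := fun hmem => hx (Set.mem_union_right _ hmem)
        rw [Set.indicator_of_notMem hx, hgS x hx1, hgS _ hx2]
        simp
    have hle := norm_integral_le_of_norm_le hbint (Filter.Eventually.of_forall hptwise)
    rw [Real.norm_eq_abs] at hle
    refine hle.trans ?_
    rw [integral_indicator_const c hUmeas, smul_eq_mul]
    have h1 : (volume U).toReal ≤ 2 * (volume S).toReal := by
      have := ENNReal.toReal_mono ((ENNReal.mul_lt_top (by norm_num) hSfin).ne) hUvol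
      simpa [ENNReal.toReal_mul] using this
    calc (volume U).toReal * c ≤ (2 * (volume S).toReal) * c :=
          mul_le_mul_of_nonneg_right h1 hc0
      _ = c * (2 * (volume S).toReal) := by ring
  -- final estimate
  have hfinal : |(2:ℝ) * ∫ u, K u * (T u - T 0)|
      ≤ 2 * (M * M' * κ * (volume S).toReal * h ^ (α + β)) := by
    rw [htwo]
    have hbint : Integrable (fun u =>
        (M * M' * (2 * (volume S).toReal) * h ^ (α + β)) * (‖u‖ ^ (α + β) * |K u|)) volume :=
      hκint.const_mul _
    have hptwise : ∀ u, ‖K u * (T u + T (-u) - 2 * T 0)‖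
        ≤ (M * M' * (2 * (volume S).toReal) * h ^ (α + β)) * (‖u‖ ^ (α + β) * |K u|) := by
      intro u
      rw [Real.norm_eq_abs, abs_mul]
      have := mul_le_mul_of_nonneg_left (hWbound u) (abs_nonneg (K u))
      refine this.trans (le_of_eq ?_)
      rw [Real.mul_rpow hh.le (norm_nonneg u)]
      ring
    have hle := norm_integral_le_of_norm_le hbint (Filter.Eventually.of_forall hptwise)
    rw [Real.norm_eq_abs] at hle
    refine hle.trans (le_of_eq ?_)
    rw [integral_const_mul, ← hκ]
    ring
  rw [abs_mul, abs_two] at hfinal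
  linarith [abs_nonneg (∫ u, K u * (T u - T 0))]
end
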